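/- Let a group N act on a set M such that every orbit of N on M is infinite. Then for every two finite subsets S, T ⊆ M there exists an element n ∈ N such that n·S ∩ T = ∅. -/

import Mathlib

open scoped Pointwise

/-- If every orbit of a group action is infinite, then for any two finite
subsets `S T` of the space there is a group element moving `S` off `T`. -/
theorem exists_translate_disjoint_of_orbits_infinite
    (N : Type*) [Group N] (M : Type*) [MulAction N M]
    (h : ∀ x : M, (MulAction.orbit N x).Infinite)
    (S T : Finset M) :
    ∃ n : N, ∀ s ∈ S, n • s ∉ T := by
  classical
  by_contra hcon
  push_neg at hcon
  -- for each (s,t), choose g with g • s = t if possible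
  have gchoice : ∀ p : M × M, ∃ g : N, (∃ g' : N, g' • p.1 = p.2) → g • p.1 = p.2 := by
    intro p
    by_cases hp : ∃ g' : N, g' • p.1 = p.2
    · obtain ⟨g, hg⟩ := hp
      exact ⟨g, fun _ => hg⟩
    · exact ⟨1, fun hp' => absurd hp' hp⟩
  choose g hg using gchoice
  set H : M × M → Subgroup N := fun p => MulAction.stabilizer N p.1 with hH
  have hcovers : ⋃ p ∈ S ×ˢ T, g p • (H p : Set N) = Set.univ := by
    apply Set.eq_univ_of_forall
    intro n
    obtain ⟨s, hs, ht⟩ := hcon n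
    refine Set.mem_biUnion (Finset.mk_mem_product hs ht) ?_
    have hex : ∃ g' : N, g' • s = (n • s : M) := ⟨n, rfl⟩
    have hgp := hg (s, n • s) hex
    simp only at hgp
    rw [mem_leftCoset_iff]
    simp only [hH, SetLike.mem_coe, MulAction.mem_stabilizer_iff, mul_smul,
      inv_smul_eq_iff]
    rw [hgp]
  obtain ⟨p, _, hfi⟩ := Subgroup.exists_finiteIndex_of_leftCoset_cover hcovers
  -- finite index stabilizer contradicts infinite orbit
  have : (MulAction.orbit N p.1).Infinite := h p.1
  have hcard : Nat.card (MulAction.orbit N p.1) = (MulAction.stabilizer N p.1).index := by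
    rw [Subgroup.index]
    exact Nat.card_congr (MulAction.orbitEquivQuotientStabilizer N p.1)
  have hfin : (MulAction.orbit N p.1).Finite := by
    have : (H p).FiniteIndex := hfi
    have : Finite (N ⧸ MulAction.stabilizer N p.1) := @Subgroup.finite_quotient_of_finiteIndex _ _ (MulAction.stabilizer N p.1) this
    exact Set.finite_coe_iff.mp (Finite.of_equiv _ (MulAction.orbitEquivQuotientStabilizer N p.1).symm)
  exact this hfin
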